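/- Termination of the basic DPLL system: if DecVars is finite, then for any input formula F₀, the transition relation →d (union of decide, unitPropagate, backtrack) is well-founded on the set of states reachable from the initial state ([], F₀). -/

import Mathlib

namespace SatFormal

/-- Propositional literals: positive or negative variables (variables are naturals). -/
inductive Literal where
  | Pos : Nat → Literal
  | Neg : Nat → Literal
deriving DecidableEq, Repr

/-- The variable of a literal. -/
def Literal.var : Literal → Nat
  | .Pos n => n
  | .Neg n => n

/-- The opposite literal. -/
def Literal.opp : Literal → Literal
  | .Pos n => .Neg n
  | .Neg n => .Pos n

abbrev Clause := List Literal
abbrev Formula := List Clause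
/-- A trail is a list of annotated literals: (literal, decision flag). -/
abbrev Trail := List (Literal × Bool)

/-- Underlying literals of a trail. -/
def elements (M : Trail) : List Literal := M.map Prod.fst
/-- Decision literals of a trail. -/
def decisions (M : Trail) : List Literal := (M.filter (fun a => a.2)).map Prod.fst
/-- Number of decision literals. -/
def currentLevel (M : Trail) : Nat := (M.filter (fun a => a.2)).length

/-- Prefix of the trail up to and including the first occurrence of literal `l`. -/
def prefixTo (l : Literal) (M : Trail) : Trail :=
  M.takeWhile (fun a => decide (a.1 ≠ l)) ++ (M.dropWhile (fun a => decide (a.1 ≠ l))).take 1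

/-- Decision literals preceding the first occurrence of `l` (including `l` if it is one). -/
def decisionsTo (l : Literal) (M : Trail) : List Literal := decisions (prefixTo l M)

/-- Decision level of a literal in a trail. -/
def levelOf (l : Literal) (M : Trail) : Nat := (decisionsTo l M).length

/-- Longest prefix of the trail containing only elements of level ≤ `lv`. -/
def prefixToLevel (lv : Nat) : Trail → Trail
  | [] => []
  | a :: M =>
      if a.2 then (if 0 < lv then a :: prefixToLevel (lv - 1) M else [])
      else a :: prefixToLevel lv M

/-- The last decision literal of a trail (default `Pos 0` when there is none). -/
def lastDecision (M : Trail) : Literal := (decisions M).getLastD (Literal.Pos 0)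

/-- The prefix of the trail before its last decision literal. -/
def prefixBeforeLastDecision (M : Trail) : Trail :=
  ((M.reverse.dropWhile (fun a => !a.2)).tail).reverse

/-- A clause is true in a valuation. -/
def clauseTrue (v : List Literal) (c : Clause) : Prop := ∃ l ∈ c, l ∈ v
/-- A formula is true in a valuation. -/
def formulaTrue (v : List Literal) (F : Formula) : Prop := ∀ c ∈ F, clauseTrue v c
/-- A clause is false in a valuation. -/
def clauseFalse (v : List Literal) (c : Clause) : Prop := ∀ l ∈ c, l.opp ∈ v
/-- A formula is false in a valuation. -/
def formulaFalse (v : List Literal) (F : Formula) : Prop := ∃ c ∈ F, clauseFalse v c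
/-- Consistency of a valuation. -/
def consistent (v : List Literal) : Prop := ¬ ∃ l, l ∈ v ∧ Literal.opp l ∈ v
/-- A model of a formula. -/
def isModel (v : List Literal) (F : Formula) : Prop := consistent v ∧ formulaTrue v F
/-- Satisfiability. -/
def sat (F : Formula) : Prop := ∃ v, isModel v F
/-- A formula entails a clause. -/
def entailsClause (F : Formula) (c : Clause) : Prop := ∀ v, isModel v F → clauseTrue v c
/-- A formula entails a literal. -/
def entailsLit (F : Formula) (l : Literal) : Prop := ∀ v, isModel v F → l ∈ v
/-- Logical equivalence of formulae. -/
def equivFormula (F1 F2 : Formula) : Prop := ∀ v, isModel v F1 ↔ isModel v F2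

/-- Variables of a formula. -/
def varsF (F : Formula) : Set Nat := {n | ∃ c ∈ F, ∃ l ∈ c, Literal.var l = n}
/-- Variables of a valuation. -/
def varsV (v : List Literal) : Set Nat := {n | ∃ l ∈ v, Literal.var l = n}
/-- Variables of a trail. -/
def varsT (M : Trail) : Set Nat := varsV (elements M)

/-- The formula of unit clauses corresponding to a list of literals. -/
def valToForm (v : List Literal) : Formula := v.map (fun l => [l])

/-- A clause is unit in a valuation with unit literal `l`. -/
def isUnit (c : Clause) (l : Literal) (v : List Literal) : Prop :=
  l ∈ c ∧ l ∉ v ∧ l.opp ∉ v ∧ ∀ l' ∈ c, l' ≠ l → Literal.opp l' ∈ v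

/-- `a` precedes `b` in the list `v` (first positions compared). -/
def precedes (a b : Literal) (v : List Literal) : Prop :=
  a ∈ v ∧ b ∈ v ∧ v.idxOf a < v.idxOf b

/-- A clause `c` is a reason for propagation of `l` in valuation `v`. -/
def isReason (c : Clause) (l : Literal) (v : List Literal) : Prop :=
  l ∈ c ∧ l ∈ v ∧ ∀ l' ∈ c, l' ≠ l → Literal.opp l' ∈ v ∧ precedes (Literal.opp l') l v

/-- `l` is the literal of `c` asserted last in `v`. -/
def isLastAsserted (l : Literal) (c : List Literal) (v : List Literal) : Prop :=
  l ∈ c ∧ l ∈ v ∧ ∀ l' ∈ c, l' ∈ v → l' = l ∨ precedes l' l v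

/-- The list of opposites of the literals of a clause. -/
def oppC (c : Clause) : List Literal := c.map Literal.opp

/-- `lv` is a backjump level for literal `l` and clause `c` w.r.t. trail `M`. -/
def isBackjumpLevel (lv : Nat) (l : Literal) (c : Clause) (M : Trail) : Prop :=
  clauseFalse (elements M) c ∧ isLastAsserted l.opp (oppC c) (elements M) ∧
  lv < levelOf l.opp M ∧ ∀ l' ∈ c, l' ≠ l → levelOf (Literal.opp l') M ≤ lv

/-- Minimal backjump level. -/
def isMinimalBackjumpLevel (lv : Nat) (l : Literal) (c : Clause) (M : Trail) : Prop :=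
  isBackjumpLevel lv l c M ∧ ∀ lv' < lv, ¬ isBackjumpLevel lv' l c M

/-- Unique implication point condition. -/
def isUIP (l : Literal) (c : Clause) (M : Trail) : Prop :=
  clauseFalse (elements M) c ∧ isLastAsserted l.opp (oppC c) (elements M) ∧
  ∀ l' ∈ c, l' ≠ l → levelOf (Literal.opp l') M < levelOf l.opp M

/-- Resolution of clauses `C` and `c` over the literal `l`. -/
def resolve (C c : Clause) (l : Literal) : Clause :=
  C.filter (fun x => decide (x ≠ l)) ++ c.filter (fun x => decide (x ≠ l.opp))

/-- Lexicographic extension of a relation to lists. -/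
def lexExt {X : Type _} (r : X → X → Prop) (s t : List X) : Prop :=
  (∃ rr, s = t ++ rr ∧ rr ≠ []) ∨
  (∃ rr s' t' a b, s = rr ++ a :: s' ∧ t = rr ++ b :: t' ∧ r a b)

/-- Ordering on annotated literals: decisions are greater than non-decisions. -/
def litSucc (a b : Literal × Bool) : Prop := a.2 = true ∧ b.2 = false

/-- Trail ordering: lexicographic extension of `litSucc`. -/
def trailSucc : Trail → Trail → Prop := lexExt litSucc

/-- One step of the multiset extension of a relation. -/
def multExtStep {α : Type _} (r : α → α → Prop) (S1 S2 : Multiset α) : Prop :=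
  ∃ (S S2' : Multiset α) (s1 : α), S1 = S + {s1} ∧ S2 = S + S2' ∧ ∀ s2 ∈ S2', r s1 s2

/-- Multiset extension: transitive closure of `multExtStep`. -/
def multExt {α : Type _} (r : α → α → Prop) : Multiset α → Multiset α → Prop :=
  Relation.TransGen (multExtStep r)

/-- Clause ordering induced by a trail `M` (as a list of literals). -/
def clauseSucc (M : List Literal) (C1 C2 : Clause) : Prop :=
  multExt (fun a b => precedes a b M)
    ((oppC C2).dedup : Multiset Literal) ((oppC C1).dedup : Multiset Literal)

/-! ## Basic DPLL system -/

abbrev DState := Trail × Formula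

def decideR (DecVars : Set Nat) (s1 s2 : DState) : Prop :=
  ∃ l : Literal, l.var ∈ DecVars ∧ l ∉ elements s1.1 ∧ l.opp ∉ elements s1.1 ∧
    s2.1 = s1.1 ++ [(l, true)] ∧ s2.2 = s1.2

def unitPropagateR (s1 s2 : DState) : Prop :=
  ∃ c l, c ∈ s1.2 ∧ isUnit c l (elements s1.1) ∧
    s2.1 = s1.1 ++ [(l, false)] ∧ s2.2 = s1.2

def backtrackR (s1 s2 : DState) : Prop :=
  formulaFalse (elements s1.1) s1.2 ∧ decisions s1.1 ≠ [] ∧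
  s2.1 = prefixBeforeLastDecision s1.1 ++ [((lastDecision s1.1).opp, false)] ∧ s2.2 = s1.2

def stepD (DecVars : Set Nat) (s1 s2 : DState) : Prop :=
  unitPropagateR s1 s2 ∨ backtrackR s1 s2 ∨ decideR DecVars s1 s2

def accepting (DecVars : Set Nat) (s : DState) : Prop :=
  ¬ formulaFalse (elements s.1) s.2 ∧
  ¬ ∃ l : Literal, l.var ∈ DecVars ∧ l ∉ elements s.1 ∧ l.opp ∉ elements s.1

def rejecting (s : DState) : Prop :=
  formulaFalse (elements s.1) s.2 ∧ decisions s.1 = []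

/-! ## Conflict analysis system -/

abbrev CState := Trail × Formula × Clause × Bool

def c_decide (DecVars : Set Nat) : CState → CState → Prop :=
  fun (M1, F1, C1, b1) (M2, F2, C2, b2) =>
    (∃ l : Literal, l.var ∈ DecVars ∧ l ∉ elements M1 ∧ l.opp ∉ elements M1 ∧
      M2 = M1 ++ [(l, true)]) ∧ F2 = F1 ∧ C2 = C1 ∧ b2 = b1

def c_unitPropagate (Vars : Set Nat) : CState → CState → Prop :=
  fun (M1, F1, C1, b1) (M2, F2, C2, b2) =>
    (∃ (c : Clause) (l : Literal), entailsClause F1 c ∧ l.var ∈ Vars ∧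
      isUnit c l (elements M1) ∧ M2 = M1 ++ [(l, false)]) ∧
    F2 = F1 ∧ C2 = C1 ∧ b2 = b1

def c_conflict : CState → CState → Prop :=
  fun (M1, F1, C1, b1) (M2, F2, C2, b2) =>
    b1 = false ∧ (∃ c : Clause, entailsClause F1 c ∧ clauseFalse (elements M1) c ∧ C2 = c) ∧
    M2 = M1 ∧ F2 = F1 ∧ b2 = true ∧ C1 = C1

def c_explain : CState → CState → Prop :=
  fun (M1, F1, C1, b1) (M2, F2, C2, b2) =>
    b1 = true ∧ (∃ (l : Literal) (c : Clause), l ∈ C1 ∧ isReason c l.opp (elements M1) ∧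
      entailsClause F1 c ∧ C2 = resolve C1 c l) ∧
    M2 = M1 ∧ F2 = F1 ∧ b2 = true

def c_backjump : CState → CState → Prop :=
  fun (M1, F1, C1, b1) (M2, F2, C2, b2) =>
    b1 = true ∧ (∃ (l : Literal) (lv : Nat), isBackjumpLevel lv l C1 M1 ∧
      M2 = prefixToLevel lv M1 ++ [(l, false)]) ∧
    F2 = F1 ∧ C2 = [] ∧ b2 = false

def c_learn : CState → CState → Prop :=
  fun (M1, F1, C1, b1) (M2, F2, C2, b2) =>
    b1 = true ∧ C1 ∉ F1 ∧ M2 = M1 ∧ F2 = F1 ++ [C1] ∧ C2 = C1 ∧ b2 = b1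

def stepC (F0 : Formula) (DecVars : Set Nat) (s1 s2 : CState) : Prop :=
  c_decide DecVars s1 s2 ∨ c_unitPropagate (varsF F0 ∪ DecVars) s1 s2 ∨
  c_conflict s1 s2 ∨ c_explain s1 s2 ∨ c_backjump s1 s2 ∨ c_learn s1 s2

/-! ## System with restarts and forgetting -/

abbrev RState := Trail × Formula × Clause × Bool × Bool

def r_decide (F0 : Formula) (DecVars : Set Nat) : RState → RState → Prop :=
  fun (M1, Fl1, C1, cf1, ln1) (M2, Fl2, C2, cf2, ln2) =>
    (∃ l : Literal, l.var ∈ DecVars ∧ l ∉ elements M1 ∧ l.opp ∉ elements M1 ∧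
      M2 = M1 ++ [(l, true)]) ∧
    (¬ ∃ (c : Clause) (l : Literal), c ∈ F0 ++ Fl1 ∧ isUnit c l (elements M1)) ∧
    Fl2 = Fl1 ∧ C2 = C1 ∧ cf2 = cf1 ∧ ln2 = ln1

def r_unitPropagate (F0 : Formula) : RState → RState → Prop :=
  fun (M1, Fl1, C1, cf1, ln1) (M2, Fl2, C2, cf2, ln2) =>
    (∃ (c : Clause) (l : Literal), c ∈ F0 ++ Fl1 ∧ isUnit c l (elements M1) ∧
      M2 = M1 ++ [(l, false)]) ∧
    Fl2 = Fl1 ∧ C2 = C1 ∧ cf2 = cf1 ∧ ln2 = ln1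

def r_conflict (F0 : Formula) : RState → RState → Prop :=
  fun (M1, Fl1, C1, cf1, ln1) (M2, Fl2, C2, cf2, ln2) =>
    cf1 = false ∧ (∃ c : Clause, c ∈ F0 ++ Fl1 ∧ clauseFalse (elements M1) c ∧ C2 = c) ∧
    M2 = M1 ∧ Fl2 = Fl1 ∧ cf2 = true ∧ ln2 = ln1 ∧ C1 = C1

def r_explain (F0 : Formula) : RState → RState → Prop :=
  fun (M1, Fl1, C1, cf1, ln1) (M2, Fl2, C2, cf2, ln2) =>
    cf1 = true ∧ (∃ (l : Literal) (c : Clause), l ∈ C1 ∧ isReason c l.opp (elements M1) ∧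
      c ∈ F0 ++ Fl1 ∧ C2 = resolve C1 c l) ∧
    M2 = M1 ∧ Fl2 = Fl1 ∧ cf2 = true ∧ ln2 = ln1

def r_backjumpLearn : RState → RState → Prop :=
  fun (M1, Fl1, C1, cf1, _ln1) (M2, Fl2, C2, cf2, ln2) =>
    cf1 = true ∧ (∃ (l : Literal) (lv : Nat), isMinimalBackjumpLevel lv l C1 M1 ∧
      M2 = prefixToLevel lv M1 ++ [(l, false)]) ∧
    Fl2 = Fl1 ++ [C1] ∧ C2 = [] ∧ cf2 = false ∧ ln2 = true

def r_forget : RState → RState → Prop :=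
  fun (M1, Fl1, C1, cf1, ln1) (M2, Fl2, C2, cf2, ln2) =>
    cf1 = false ∧ ln1 = true ∧
    (∃ Fc : Formula, (∀ c ∈ Fc, c ∈ Fl1) ∧
      (∀ c ∈ Fc, ¬ ∃ l : Literal, isReason c l (elements M1)) ∧
      Fl2 = Fl1.filter (fun c => decide (c ∉ Fc))) ∧
    M2 = M1 ∧ C2 = C1 ∧ cf2 = cf1 ∧ ln2 = false

def r_restart : RState → RState → Prop :=
  fun (M1, Fl1, C1, cf1, ln1) (M2, Fl2, C2, cf2, ln2) =>
    cf1 = false ∧ ln1 = true ∧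
    M2 = prefixToLevel 0 M1 ∧ Fl2 = Fl1 ∧ C2 = C1 ∧ cf2 = cf1 ∧ ln2 = false

/-- The system without `forget` (with `restart`). -/
def stepF (F0 : Formula) (DecVars : Set Nat) (s1 s2 : RState) : Prop :=
  r_decide F0 DecVars s1 s2 ∨ r_unitPropagate F0 s1 s2 ∨ r_conflict F0 s1 s2 ∨
  r_explain F0 s1 s2 ∨ r_backjumpLearn s1 s2 ∨ r_restart s1 s2

/-- The full system with both `restart` and `forget`. -/
def stepAll (F0 : Formula) (DecVars : Set Nat) (s1 s2 : RState) : Prop :=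
  stepF F0 DecVars s1 s2 ∨ r_forget s1 s2

/-- Normalization of a formula: remove duplicate literals and duplicate clauses. -/
def normF (F : Formula) : Formula := (F.map List.dedup).dedup

/-! ### Auxiliary material for stmt8 -/

private def meas3 : List Bool → Nat → Nat
  | [], n => 3 ^ n - 1
  | b :: L, n => (if b then 1 else 0) * 3 ^ (n - 1) + meas3 L (n - 1)

private lemma meas3_append (b : Bool) : ∀ (L : List Bool) (n : Nat), L.length < n →
    meas3 (L ++ [b]) n < meas3 L n
  | [], n, h => by
    simp only [List.nil_append, meas3]
    have h1 : 1 ≤ 3 ^ (n - 1) := Nat.one_le_pow _ _ (by norm_num)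
    have h2 : 3 ^ n = 3 * 3 ^ (n - 1) := by
      conv_lhs => rw [show n = (n - 1) + 1 by omega]
      ring
    rcases b <;> simp <;> omega
  | a :: L, n, h => by
    simp only [List.cons_append, meas3]
    have := meas3_append b L (n - 1) (by simp at h; omega)
    exact Nat.add_lt_add_left this _

private lemma meas3_backtrack : ∀ (P Q : List Bool) (n : Nat),
    (P ++ true :: Q).length ≤ n → meas3 (P ++ [false]) n < meas3 (P ++ true :: Q) n
  | [], Q, n, h => by
    have h1 : 1 ≤ 3 ^ (n - 1) := Nat.one_le_pow _ _ (by norm_num)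
    simp [meas3]
    omega
  | a :: P, Q, n, h => by
    simp only [List.cons_append, meas3]
    have := meas3_backtrack P Q (n - 1) (by simp at h ⊢; omega)
    exact Nat.add_lt_add_left this _

private lemma var_eq_cases (a l : Literal) (h : a.var = l.var) : a = l ∨ a = l.opp := by
  cases a <;> cases l <;> simp_all [Literal.var, Literal.opp]

private lemma var_opp (l : Literal) : l.opp.var = l.var := by
  cases l <;> rfl

/-- The invariant maintained by DPLL. -/
private def Inv (F0 : Formula) (Vars : Set Nat) (s : DState) : Prop :=
  s.2 = F0 ∧ ((elements s.1).map Literal.var).Nodup ∧ ∀ x ∈ elements s.1, x.var ∈ Vars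

private lemma varsF_finite (F : Formula) : (varsF F).Finite := by
  apply Set.Finite.subset (List.finite_toSet (F.flatMap (fun c => c.map Literal.var)))
  rintro n ⟨c, hc, l, hl, rfl⟩
  exact List.mem_flatMap.mpr ⟨c, hc, List.mem_map.mpr ⟨l, hl, rfl⟩⟩

private lemma backtrack_struct (M : Trail) (h : decisions M ≠ []) :
    ∃ Q, M = prefixBeforeLastDecision M ++ (lastDecision M, true) :: Q ∧
      ∀ a ∈ Q, a.2 = false := by
  classical
  set p : Literal × Bool → Bool := fun a => !a.2 with hp
  have hD : M.reverse.dropWhile p ≠ [] := by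
    intro hnil
    apply h
    have hall : ∀ a ∈ M, a.2 = false := by
      intro a ha
      have := List.dropWhile_eq_nil_iff.mp hnil a (List.mem_reverse.mpr ha)
      simpa [hp] using this
    unfold decisions
    rw [List.filter_eq_nil_iff.mpr (by intro a ha; simp [hall a ha])]
    rfl
  obtain ⟨a0, D', hD'⟩ := List.exists_cons_of_ne_nil hD
  have ha0 : a0.2 = true := by
    have h5 := List.head_dropWhile_not p hD
    have e : ∀ (L : List (Literal × Bool)) (hL : L ≠ []), L = a0 :: D' → L.head hL = a0 := by
      rintro L hL rfl; rfl
    rw [e _ hD hD'] at h5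
    simpa [hp] using h5
  set T := M.reverse.takeWhile p with hT
  have hQ : ∀ a ∈ T.reverse, a.2 = false := by
    intro a ha
    have := List.mem_takeWhile_imp (List.mem_reverse.mp ha)
    simpa [hp] using this
  have hM : M = D'.reverse ++ a0 :: T.reverse := by
    have h2 : M.reverse = T ++ a0 :: D' := by
      rw [hT, ← hD']
      exact (List.takeWhile_append_dropWhile).symm
    have h3 := congrArg List.reverse h2
    rw [List.reverse_reverse] at h3
    rw [h3]
    simp
  have hpre : prefixBeforeLastDecision M = D'.reverse := by
    unfold prefixBeforeLastDecision
    rw [← hp, hD']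
    rfl
  have hdecQ : decisions T.reverse = [] := by
    unfold decisions
    rw [List.filter_eq_nil_iff.mpr (by intro a ha; simp [hQ a ha])]
    rfl
  have hdecs : decisions M = decisions D'.reverse ++ [a0.1] := by
    conv_lhs => rw [hM]
    unfold decisions at hdecQ ⊢
    rw [List.filter_append, List.filter_cons_of_pos (by simp [ha0]), List.map_append,
      List.map_cons, hdecQ]
  have hlast : lastDecision M = a0.1 := by
    unfold lastDecision
    rw [hdecs, List.getLastD_concat]
  refine ⟨T.reverse, ?_, hQ⟩
  rw [hpre, hlast, ← ha0]
  exact hM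

private lemma inv_init (F0 : Formula) (Vars : Set Nat) : Inv F0 Vars ([], F0) := by
  refine ⟨rfl, ?_, ?_⟩ <;> simp [elements]

private lemma inv_step (F0 : Formula) (DecVars : Set Nat) (s1 s2 : DState)
    (h1 : Inv F0 (varsF F0 ∪ DecVars) s1) (h : stepD DecVars s1 s2) :
    Inv F0 (varsF F0 ∪ DecVars) s2 := by
  obtain ⟨hF, hnd, hsub⟩ := h1
  have key : ∀ (l : Literal) (b : Bool), l ∉ elements s1.1 → l.opp ∉ elements s1.1 →
      l.var ∈ varsF F0 ∪ DecVars → s2.1 = s1.1 ++ [(l, b)] → s2.2 = s1.2 →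
      Inv F0 (varsF F0 ∪ DecVars) s2 := by
    intro l b hl hlo hlv hM hFeq
    have hel : elements s2.1 = elements s1.1 ++ [l] := by
      rw [hM]; simp [elements]
    refine ⟨hFeq.trans hF, ?_, ?_⟩
    · rw [hel, List.map_append]
      rw [List.nodup_append]
      refine ⟨hnd, by simp, ?_⟩
      intro x hx y hy hx2
      simp only [List.mem_map] at hx
      obtain ⟨a, ha, rfl⟩ := hx
      simp only [List.map_cons, List.map_nil, List.mem_singleton] at hy; subst hy
      rcases var_eq_cases a l hx2 with rfl | rfl
      · exact hl ha
      · exact hlo ha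
    · intro x hx
      rw [hel] at hx
      rcases List.mem_append.mp hx with hx | hx
      · exact hsub x hx
      · simp only [List.mem_singleton] at hx; subst hx; exact hlv
  rcases h with h | h | h
  · obtain ⟨c, l, hc, hu, hM, hFeq⟩ := h
    refine key l false hu.2.1 hu.2.2.1 ?_ hM hFeq
    left
    exact ⟨c, hF ▸ hc, l, hu.1, rfl⟩
  · obtain ⟨hff, hdne, hM, hFeq⟩ := h
    obtain ⟨Q, hMeq, hQ⟩ := backtrack_struct s1.1 hdne
    set d := lastDecision s1.1 with hd
    set P := prefixBeforeLastDecision s1.1 with hP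
    have hel1 : elements s1.1 = elements P ++ d :: elements Q := by
      rw [hMeq]; simp [elements]
    have hel2 : elements s2.1 = elements P ++ [d.opp] := by
      rw [hM]; simp [elements]
    refine ⟨hFeq.trans hF, ?_, ?_⟩
    · rw [hel2, List.map_append]
      have hsl : (List.map Literal.var (elements P) ++ List.map Literal.var [d.opp]).Sublist
          (List.map Literal.var (elements s1.1)) := by
        rw [hel1, List.map_append, List.map_cons]
        refine List.Sublist.append_left ?_ _
        simp only [List.map_cons, List.map_nil, var_opp]
        exact List.cons_sublist_cons.mpr (List.nil_sublist _)
      exact hsl.nodup hnd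
    · intro x hx
      rw [hel2] at hx
      rcases List.mem_append.mp hx with hx | hx
      · exact hsub x (by rw [hel1]; exact List.mem_append.mpr (Or.inl hx))
      · simp only [List.mem_singleton] at hx
        subst hx
        rw [var_opp]
        exact hsub d (by rw [hel1]; simp)
  · obtain ⟨l, hlv, hl, hlo, hM, hFeq⟩ := h
    exact key l true hl hlo (Or.inr hlv) hM hFeq

/-- termination of the basic DPLL system on reachable states. -/
theorem stmt8 (DecVars : Set Nat) (hfin : DecVars.Finite) (F0 : Formula) :
    WellFounded (fun s2 s1 : DState =>
      Relation.ReflTransGen (stepD DecVars) ([], F0) s1 ∧ stepD DecVars s1 s2) := by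
  classical
  have hVfin : (varsF F0 ∪ DecVars).Finite := (varsF_finite F0).union hfin
  set n := hVfin.toFinset.card with hn
  have hlen : ∀ s : DState, Inv F0 (varsF F0 ∪ DecVars) s → s.1.length ≤ n := by
    intro s hs
    obtain ⟨-, hnd, hsub⟩ := hs
    have h1 : ((elements s.1).map Literal.var).toFinset ⊆ hVfin.toFinset := by
      intro x hx
      simp only [List.mem_toFinset, List.mem_map] at hx
      obtain ⟨a, ha, rfl⟩ := hx
      simpa using hsub a ha
    have h2 := Finset.card_le_card h1
    rw [List.toFinset_card_of_nodup hnd] at h2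
    simpa [elements] using h2
  have hreach_inv : ∀ s, Relation.ReflTransGen (stepD DecVars) ([], F0) s →
      Inv F0 (varsF F0 ∪ DecVars) s := by
    intro s h
    induction h with
    | refl => exact inv_init F0 _
    | tail h hstep ih => exact inv_step F0 DecVars _ _ ih hstep
  have hdec : ∀ s1 s2, Inv F0 (varsF F0 ∪ DecVars) s1 → stepD DecVars s1 s2 →
      meas3 (s2.1.map Prod.snd) n < meas3 (s1.1.map Prod.snd) n := by
    intro s1 s2 hinv hstep
    have hinv2 := inv_step F0 DecVars s1 s2 hinv hstep
    have hkey : ∀ (p : Literal × Bool), s2.1 = s1.1 ++ [p] →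
        meas3 (s2.1.map Prod.snd) n < meas3 (s1.1.map Prod.snd) n := by
      intro p hM
      have h2 : s2.1.map Prod.snd = s1.1.map Prod.snd ++ [p.2] := by rw [hM]; simp
      rw [h2]
      apply meas3_append
      have := hlen s2 hinv2
      rw [hM, List.length_append] at this
      rw [List.length_map]
      simp at this
      omega
    rcases hstep with h | h | h
    · obtain ⟨c, l, hc, hu, hM, hFeq⟩ := h
      exact hkey _ hM
    · obtain ⟨hff, hdne, hM, hFeq⟩ := h
      obtain ⟨Q, hMeq, hQ⟩ := backtrack_struct s1.1 hdne
      have h1 : s1.1.map Prod.snd =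
          (prefixBeforeLastDecision s1.1).map Prod.snd ++ true :: Q.map Prod.snd := by
        conv_lhs => rw [hMeq]
        simp
      have h2 : s2.1.map Prod.snd = (prefixBeforeLastDecision s1.1).map Prod.snd ++ [false] := by
        rw [hM]; simp
      rw [h1, h2]
      apply meas3_backtrack
      rw [← h1, List.length_map]
      exact hlen s1 hinv
    · obtain ⟨l, hlv, hl, hlo, hM, hFeq⟩ := h
      exact hkey _ hM
  refine Subrelation.wf (fun {s2 s1} h => ?_)
    (InvImage.wf (fun s : DState => meas3 (s.1.map Prod.snd) n) Nat.lt_wfRel.wf)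
  exact hdec s1 s2 (hreach_inv s1 h.1) h.2

end SatFormal
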